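/- arXiv:1511.04545 — 5 statements merged into one kernel-verified Lean document; each statement's English description precedes it below -/
import Mathlib

section
/- Let β : ℝ → ℝ be monotone nondecreasing. Then for every ε ∈ (0,1) there exists σ ∈ (0, ε) such that β is differentiable at σ and its derivative satisfies β'(σ) ≤ 1/(σ · log(1/σ)). -/
open MeasureTheory Set

/-- For a monotone nondecreasing function `β : ℝ → ℝ`, for every `ε ∈ (0,1)` there is a
point `σ ∈ (0, ε)` at which `β` is differentiable with `β'(σ) ≤ 1/(σ log(1/σ))`
(the "entropy condition"). -/
theorem entropy_condition_exists (β : ℝ → ℝ) (hβ : Monotone β) :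
    ∀ ε ∈ Set.Ioo (0 : ℝ) 1, ∃ σ ∈ Set.Ioo (0 : ℝ) ε,
      DifferentiableAt ℝ β σ ∧ deriv β σ ≤ 1 / (σ * Real.log (1 / σ)) := by
  intro ε hε
  by_contra hcon
  push_neg at hcon
  obtain ⟨hε0, hε1⟩ := hε
  set b : ℝ := ε / 2 with hb_def
  have hb0 : 0 < b := by positivity
  have hb1 : b < 1 := by simp only [hb_def]; linarith
  have hbε : b < ε := by simp only [hb_def]; linarith
  have hlogb : 0 < -Real.log b := by
    have := Real.log_neg hb0 hb1
    linarith
  set C : ℝ := hβ.stieltjesFunction b - β 0 with hC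
  set L : ℝ := Real.log (-Real.log b) with hL
  set T : ℝ := max (C + L + 1) (L + 1) with hT
  set a : ℝ := Real.exp (-(Real.exp T)) with ha
  have ha0 : 0 < a := Real.exp_pos _
  have hexpT : -Real.log b < Real.exp T := by
    have h1 : L < T := lt_of_lt_of_le (by linarith) (le_max_right _ _)
    calc -Real.log b = Real.exp L := (Real.exp_log hlogb).symm
    _ < Real.exp T := Real.exp_lt_exp.mpr h1
  have hab : a < b := by
    rw [ha, ← Real.exp_log hb0]
    exact Real.exp_lt_exp.mpr (by linarith)
  have hloga : Real.log a = -(Real.exp T) := by rw [ha, Real.log_exp]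
  -- comparison function and antiderivative
  set g : ℝ → ℝ := fun x => 1 / (x * Real.log (1 / x)) with hg
  set F : ℝ → ℝ := fun s => -Real.log (-Real.log s) with hF
  have hmem : ∀ x ∈ Set.Icc a b, 0 < x ∧ x < 1 := fun x hx =>
    ⟨lt_of_lt_of_le ha0 hx.1, lt_of_le_of_lt hx.2 hb1⟩
  have hlogpos : ∀ x : ℝ, 0 < x → x < 1 → 0 < Real.log (1 / x) := by
    intro x hx0 hx1
    rw [one_div, Real.log_inv]
    linarith [Real.log_neg hx0 hx1]
  have hcont : ContinuousOn g (Set.Icc a b) := by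
    intro x hx
    obtain ⟨hx0, hx1⟩ := hmem x hx
    have hlx : Real.log (1 / x) ≠ 0 := (hlogpos x hx0 hx1).ne'
    apply ContinuousAt.continuousWithinAt
    exact continuousAt_const.div
      (continuousAt_id.mul ((Real.continuousAt_log (one_div_ne_zero hx0.ne')).comp
        (continuousAt_const.div continuousAt_id hx0.ne')))
      (mul_ne_zero hx0.ne' hlx)
  have hderivF : ∀ x ∈ Set.Icc a b, HasDerivAt F (g x) x := by
    intro x hx
    obtain ⟨hx0, hx1⟩ := hmem x hx
    have hlogx : 0 < -Real.log x := by linarith [Real.log_neg hx0 hx1]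
    have h1 : HasDerivAt (fun s : ℝ => -Real.log s) (-x⁻¹) x :=
      (Real.hasDerivAt_log hx0.ne').neg
    have h2 : HasDerivAt Real.log (-Real.log x)⁻¹ (-Real.log x) :=
      Real.hasDerivAt_log hlogx.ne'
    have h3 := (h2.comp x h1).neg
    convert h3 using 1
    · rfl
    · rfl
    · rfl
    rw [hg]
    simp only [one_div, Real.log_inv]
    field_simp
  -- integrability and nonnegativity
  have hint : IntegrableOn g (Set.Ioc a b) volume :=
    (hcont.integrableOn_Icc).mono_set Set.Ioc_subset_Icc_self
  have hnonneg : 0 ≤ᵐ[volume.restrict (Set.Ioc a b)] g := by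
    filter_upwards [ae_restrict_mem measurableSet_Ioc] with x hx
    have h := hmem x ⟨hx.1.le, hx.2⟩
    exact le_of_lt (div_pos one_pos (mul_pos h.1 (hlogpos x h.1 h.2)))
  -- pointwise a.e. bound on the Radon-Nikodym derivative
  have hae : ∀ᵐ x ∂(volume.restrict (Set.Ioc a b)),
      ENNReal.ofReal (g x) ≤ hβ.stieltjesFunction.measure.rnDeriv volume x := by
    have h2 : ∀ᵐ x ∂(volume.restrict (Set.Ioc a b)),
        HasDerivAt β ((hβ.stieltjesFunction.measure.rnDeriv volume x).toReal) x :=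
      ae_restrict_of_ae hβ.ae_hasDerivAt
    filter_upwards [h2, ae_restrict_mem measurableSet_Ioc] with x hx hxmem
    have hxIoo : x ∈ Set.Ioo (0 : ℝ) ε :=
      ⟨lt_trans ha0 hxmem.1, lt_of_le_of_lt hxmem.2 hbε⟩
    have hd : deriv β x = (hβ.stieltjesFunction.measure.rnDeriv volume x).toReal := hx.deriv
    have hlt := hcon x hxIoo hx.differentiableAt
    rw [hd] at hlt
    exact ENNReal.ofReal_le_of_le_toReal hlt.le
  -- integral comparison
  have key : ENNReal.ofReal (∫ x in Set.Ioc a b, g x)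
      ≤ hβ.stieltjesFunction.measure (Set.Ioc a b) := by
    rw [ofReal_integral_eq_lintegral_ofReal hint hnonneg]
    calc ∫⁻ x in Set.Ioc a b, ENNReal.ofReal (g x)
        ≤ ∫⁻ x in Set.Ioc a b, hβ.stieltjesFunction.measure.rnDeriv volume x :=
          lintegral_mono_ae hae
      _ ≤ hβ.stieltjesFunction.measure (Set.Ioc a b) :=
          Measure.setLIntegral_rnDeriv_le _
  -- compute the integral via FTC
  have hInt : ∫ x in Set.Ioc a b, g x = F b - F a := by
    rw [← intervalIntegral.integral_of_le hab.le]
    apply intervalIntegral.integral_eq_sub_of_hasDerivAt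
    · intro x hx
      rw [Set.uIcc_of_le hab.le] at hx
      exact hderivF x hx
    · apply ContinuousOn.intervalIntegrable
      rwa [Set.uIcc_of_le hab.le]
  have hmeas : hβ.stieltjesFunction.measure (Set.Ioc a b)
      = ENNReal.ofReal (hβ.stieltjesFunction b - hβ.stieltjesFunction a) :=
    hβ.stieltjesFunction.measure_Ioc a b
  rw [hInt, hmeas] at key
  have hGba : 0 ≤ hβ.stieltjesFunction b - hβ.stieltjesFunction a :=
    sub_nonneg.mpr (hβ.stieltjesFunction.mono hab.le)
  have hle : F b - F a ≤ hβ.stieltjesFunction b - hβ.stieltjesFunction a :=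
    (ENNReal.ofReal_le_ofReal_iff hGba).mp key
  -- evaluate F b - F a
  have hFa : F a = -T := by
    rw [hF]
    simp only [hloga, neg_neg, Real.log_exp]
  have hFb : F b = -L := by rw [hF, hL]
  -- lower bound on G a
  have hGa : β 0 ≤ hβ.stieltjesFunction a := by
    rw [hβ.stieltjesFunction_eq]
    exact le_trans (hβ ha0.le) (hβ.le_rightLim le_rfl)
  have hTC : C + L + 1 ≤ T := le_max_left _ _
  rw [hFa, hFb] at hle
  rw [hC] at hTC
  linarith
end

section
/- Let p ∈ [0,1), K ∈ ℝ and σ > 0 with 1 − 2σ²K > 0, and let f : ℝ → ℝ be twice differentiable with f''(t) + 2 f(t)³ − (2 − p²) f(t) = 0 for all t ∈ ℝ. Define k(t) = (1/σ) · √(2(1 − 2σ²K)/(2 − p²)) · f( √((1 − 2σ²K)/(2(2 − p²))) · t/σ ). Then k(t) = σ² ( 2 k''(t) + k(t)³ + 2 K k(t) ) for all t ∈ ℝ. -/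
/-- From a solution `f` of `f'' + 2 f³ − (2 − p²) f = 0`, the rescaled function
`k(t) = (1/σ)·√(2(1−2σ²K)/(2−p²)) · f(√((1−2σ²K)/(2(2−p²))) · t/σ)` solves the
Euler–Lagrange ODE `k = σ²(2k'' + k³ + 2Kk)` of `E_σ` on a surface of constant
Gauss curvature `K`. -/
theorem euler_lagrange_constant_curvature_solution
    (p K σ : ℝ) (hp : p ∈ Set.Ico (0 : ℝ) 1) (hσ : 0 < σ)
    (hK : 0 < 1 - 2 * σ ^ 2 * K)
    (f f' f'' : ℝ → ℝ)
    (hf : ∀ t, HasDerivAt f (f' t) t) (hf' : ∀ t, HasDerivAt f' (f'' t) t)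
    (hode : ∀ t, f'' t + 2 * (f t) ^ 3 - (2 - p ^ 2) * f t = 0)
    (k : ℝ → ℝ)
    (hk : k = fun t =>
      (1 / σ) * Real.sqrt (2 * (1 - 2 * σ ^ 2 * K) / (2 - p ^ 2)) *
        f (Real.sqrt ((1 - 2 * σ ^ 2 * K) / (2 * (2 - p ^ 2))) * t / σ)) :
    ∀ t, k t = σ ^ 2 * (2 * deriv (deriv k) t + (k t) ^ 3 + 2 * K * k t) := by
  obtain ⟨hp0, hp1⟩ := hp
  have hq : 0 < 2 - p ^ 2 := by nlinarith
  set c := 1 - 2 * σ ^ 2 * K with hc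
  set a := Real.sqrt (2 * c / (2 - p ^ 2)) with hadef
  set b := Real.sqrt (c / (2 * (2 - p ^ 2))) with hbdef
  have ha2 : a ^ 2 = 2 * c / (2 - p ^ 2) :=
    Real.sq_sqrt (div_nonneg (by nlinarith) (by nlinarith))
  have hb2 : b ^ 2 = c / (2 * (2 - p ^ 2)) :=
    Real.sq_sqrt (div_nonneg (by nlinarith) (by nlinarith))
  have hσ0 : σ ≠ 0 := ne_of_gt hσ
  have hdk : deriv k = fun t => (1 / σ) * a * (b / σ) * f' (b * t / σ) := by
    funext t
    have h1 : HasDerivAt (fun t : ℝ => b * t / σ) (b / σ) t := by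
      simpa using ((hasDerivAt_id t).const_mul b).div_const σ
    have h2 := ((hf (b * t / σ)).comp t h1).const_mul ((1 / σ) * a)
    rw [hk]
    convert h2.deriv using 1
    · rfl
    ring
  have hddk : ∀ t, deriv (deriv k) t
      = (1 / σ) * a * (b / σ) * (b / σ) * f'' (b * t / σ) := by
    intro t
    rw [hdk]
    have h1 : HasDerivAt (fun t : ℝ => b * t / σ) (b / σ) t := by
      simpa using ((hasDerivAt_id t).const_mul b).div_const σ
    have h2 := ((hf' (b * t / σ)).comp t h1).const_mul ((1 / σ) * a * (b / σ))
    convert h2.deriv using 1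
    · rfl
    ring
  intro t
  rw [hddk, hk]
  have hf2 : f'' (b * t / σ)
      = (2 - p ^ 2) * f (b * t / σ) - 2 * f (b * t / σ) ^ 3 := by
    have := hode (b * t / σ); linarith
  rw [hf2]
  set F := f (b * t / σ) with hF
  have key : c + 2 * σ ^ 2 * K = 1 := by rw [hc]; ring
  have hb2' : 2 * (2 - p ^ 2) * b ^ 2 = c := by
    rw [hb2]; field_simp
  have ha3' : (2 - p ^ 2) * a ^ 3 = 2 * c * a := by
    have h3 : a ^ 3 = a * a ^ 2 := by ring
    rw [h3, ha2]; field_simp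
  have clean : a * F = 2 * a * b ^ 2 * ((2 - p ^ 2) * F - 2 * F ^ 3)
      + a ^ 3 * F ^ 3 + 2 * σ ^ 2 * K * (a * F) := by
    refine mul_left_cancel₀ hq.ne' ?_
    linear_combination (-(a * ((2 - p ^ 2) * F - 2 * F ^ 3))) * hb2' + (-(F ^ 3)) * ha3'
      + (-((2 - p ^ 2) * a * F)) * key
  field_simp
  linear_combination clean
end

section
/- Let 0 < σ < 1/√2 and set a = σ/√(1 − σ²), and define u : ℝ → ℝ³ by u(t) = (a cos(t/a), a sin(t/a), √(1 − a²)). Then u is a unit-speed curve on the unit sphere S² whose geodesic curvature is the constant k = √(1 − 2σ²)/σ, i.e. ‖u''(t) − ⟨u''(t), u(t)⟩u(t)‖ = √(1 − 2σ²)/σ for all t, and this constant satisfies the Euler–Lagrange identity k = σ²(k³ + 2k); hence u solves the constant-curvature Euler–Lagrange equation k = σ²(2k'' + k³ + 2Kk) of E_σ on S² (where K = 1 and k'' = 0). -/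
set_option maxHeartbeats 1600000 in
/-- For `0 < σ < 1/√2` and `a = σ/√(1 − σ²)`, the unit-speed latitude circle
`u(t) = (a cos(t/a), a sin(t/a), √(1 − a²))` lies on the unit sphere, has constant
geodesic curvature `k = √(1 − 2σ²)/σ`, and this constant satisfies the
Euler–Lagrange identity `k = σ²(k³ + 2k)` (hence `u` solves the constant-curvature
Euler–Lagrange equation of `E_σ` on `S²`, where `K = 1` and `k'' = 0`). -/
theorem latitude_circle_is_critical_point (σ : ℝ) (hσ : 0 < σ)
    (hσ' : σ < 1 / Real.sqrt 2) (a : ℝ) (ha : a = σ / Real.sqrt (1 - σ ^ 2))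
    (u : ℝ → EuclideanSpace ℝ (Fin 3))
    (hu : u = fun t => WithLp.toLp 2 ![a * Real.cos (t / a), a * Real.sin (t / a),
      Real.sqrt (1 - a ^ 2)])
    (k : ℝ) (hk : k = Real.sqrt (1 - 2 * σ ^ 2) / σ) :
    (∀ t : ℝ, ‖u t‖ = 1) ∧ (∀ t : ℝ, ‖deriv u t‖ = 1) ∧
      (∀ t : ℝ,
        ‖deriv (deriv u) t - (inner ℝ (deriv (deriv u) t) (u t) : ℝ) • u t‖ = k) ∧
      k = σ ^ 2 * (k ^ 3 + 2 * k) := by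
  have h2 : (0:ℝ) < Real.sqrt 2 := Real.sqrt_pos.mpr (by norm_num)
  have hσ2 : σ ^ 2 < 1 / 2 := by
    have h22 : (1 / Real.sqrt 2) ^ 2 = 1 / 2 := by
      rw [div_pow, Real.sq_sqrt (by norm_num : (0:ℝ) ≤ 2)]; norm_num
    calc σ ^ 2 < (1 / Real.sqrt 2) ^ 2 := by
          apply pow_lt_pow_left₀ hσ' hσ.le; norm_num
      _ = 1 / 2 := h22
  have h1σ : (0:ℝ) < 1 - σ ^ 2 := by nlinarith
  have h12σ : (0:ℝ) ≤ 1 - 2 * σ ^ 2 := by nlinarith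
  have hs1σ : (0:ℝ) < Real.sqrt (1 - σ ^ 2) := Real.sqrt_pos.mpr h1σ
  have ha0 : 0 < a := by rw [ha]; positivity
  have haa : a ≠ 0 := ne_of_gt ha0
  have ha2 : a ^ 2 = σ ^ 2 / (1 - σ ^ 2) := by
    rw [ha, div_pow, Real.sq_sqrt h1σ.le]
  have h1a2' : 0 ≤ 1 - a ^ 2 := by
    rw [ha2, sub_nonneg, div_le_one h1σ]; nlinarith
  have hk0 : 0 ≤ k := by rw [hk]; positivity
  have hk2 : k ^ 2 = (1 - 2 * σ ^ 2) / σ ^ 2 := by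
    rw [hk, div_pow, Real.sq_sqrt h12σ]
  -- first derivative
  have hder : ∀ t : ℝ, HasDerivAt u
      (WithLp.toLp 2 ![-Real.sin (t / a), Real.cos (t / a), 0] : EuclideanSpace ℝ (Fin 3)) t := by
    intro t
    rw [hu]
    have hg : HasDerivAt
        (fun t : ℝ => (![a * Real.cos (t / a), a * Real.sin (t / a),
          Real.sqrt (1 - a ^ 2)] : Fin 3 → ℝ))
        (![-Real.sin (t / a), Real.cos (t / a), 0]) t := by
      rw [hasDerivAt_pi]
      intro i
      fin_cases i
      · have h := ((Real.hasDerivAt_cos (t/a)).comp t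
          ((hasDerivAt_id t).div_const a)).const_mul a
        simpa using h.congr_deriv (by field_simp)
      · have h := ((Real.hasDerivAt_sin (t/a)).comp t
          ((hasDerivAt_id t).div_const a)).const_mul a
        simpa using h.congr_deriv (by field_simp)
      · simpa using hasDerivAt_const t (Real.sqrt (1 - a ^ 2))
    exact ((EuclideanSpace.equiv (Fin 3)
      ℝ).symm.toContinuousLinearMap.hasFDerivAt.comp_hasDerivAt t hg)
  have hdu : deriv u = fun t : ℝ =>
      (WithLp.toLp 2 ![-Real.sin (t / a), Real.cos (t / a), 0] : EuclideanSpace ℝ (Fin 3)) :=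
    funext fun t => (hder t).deriv
  -- second derivative
  have hder2 : ∀ t : ℝ, HasDerivAt (deriv u)
      (WithLp.toLp 2 ![-(Real.cos (t / a) / a), -(Real.sin (t / a) / a), 0] :
        EuclideanSpace ℝ (Fin 3)) t := by
    intro t
    rw [hdu]
    have hg : HasDerivAt
        (fun t : ℝ => (![-Real.sin (t / a), Real.cos (t / a), 0] : Fin 3 → ℝ))
        (![-(Real.cos (t / a) / a), -(Real.sin (t / a) / a), 0]) t := by
      rw [hasDerivAt_pi]
      intro i
      fin_cases i
      · have h := ((Real.hasDerivAt_sin (t/a)).comp t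
          ((hasDerivAt_id t).div_const a)).neg
        simpa [Function.comp_def, Pi.neg_def] using h.congr_deriv (by field_simp)
      · have h := (Real.hasDerivAt_cos (t/a)).comp t
          ((hasDerivAt_id t).div_const a)
        simpa [Function.comp_def] using h.congr_deriv (by field_simp)
      · simpa using hasDerivAt_const t (0:ℝ)
    exact ((EuclideanSpace.equiv (Fin 3)
      ℝ).symm.toContinuousLinearMap.hasFDerivAt.comp_hasDerivAt t hg)
  have hddu : deriv (deriv u) = fun t : ℝ =>
      (WithLp.toLp 2 ![-(Real.cos (t / a) / a), -(Real.sin (t / a) / a), 0] :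
        EuclideanSpace ℝ (Fin 3)) :=
    funext fun t => (hder2 t).deriv
  have hsc : ∀ t : ℝ, Real.sin (t / a) ^ 2 + Real.cos (t / a) ^ 2 = 1 :=
    fun t => Real.sin_sq_add_cos_sq (t / a)
  have hs : ∀ t : ℝ, Real.sqrt (1 - a ^ 2) ^ 2 = 1 - a ^ 2 :=
    fun _ => Real.sq_sqrt h1a2'
  refine ⟨?_, ?_, ?_, ?_⟩
  · intro t
    rw [hu]
    rw [EuclideanSpace.norm_eq]
    simp only [Fin.sum_univ_three, Matrix.cons_val_zero, Matrix.cons_val_one,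
      Matrix.head_cons, Matrix.cons_val_two, Matrix.tail_cons, Real.norm_eq_abs,
      sq_abs, PiLp.toLp_apply]
    rw [show (a * Real.cos (t / a)) ^ 2 + (a * Real.sin (t / a)) ^ 2 +
        Real.sqrt (1 - a ^ 2) ^ 2 = 1 by rw [hs t]; nlinarith [hsc t]]
    exact Real.sqrt_one
  · intro t
    rw [hdu]
    rw [EuclideanSpace.norm_eq]
    simp only [Fin.sum_univ_three, Matrix.cons_val_zero, Matrix.cons_val_one,
      Matrix.head_cons, Matrix.cons_val_two, Matrix.tail_cons, Real.norm_eq_abs,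
      sq_abs, PiLp.toLp_apply]
    rw [show (-Real.sin (t / a)) ^ 2 + Real.cos (t / a) ^ 2 + (0:ℝ) ^ 2 = 1 by
      nlinarith [hsc t]]
    exact Real.sqrt_one
  · intro t
    have hka : k ^ 2 = 1 / a ^ 2 - 1 := by
      rw [hk2, ha2]
      field_simp
      ring
    have hinner : (inner ℝ (deriv (deriv u) t) (u t) : ℝ) = -1 := by
      rw [hddu, hu]
      simp only [PiLp.inner_apply, RCLike.inner_apply, starRingEnd_apply, star_trivial,
        Fin.sum_univ_three, Matrix.cons_val_zero, Matrix.cons_val_one,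
        Matrix.head_cons, Matrix.cons_val_two, Matrix.tail_cons, PiLp.toLp_apply]
      have e1 : -(Real.cos (t / a) / a) * (a * Real.cos (t / a)) =
          -Real.cos (t / a) ^ 2 := by field_simp
      have e2 : -(Real.sin (t / a) / a) * (a * Real.sin (t / a)) =
          -Real.sin (t / a) ^ 2 := by field_simp
      rw [mul_comm (a * Real.cos (t / a)), mul_comm (a * Real.sin (t / a)), e1, e2, mul_zero, add_zero]
      linarith [hsc t]
    rw [hinner, hddu, hu]
    rw [EuclideanSpace.norm_eq]
    simp only [PiLp.sub_apply, PiLp.smul_apply, smul_eq_mul, Fin.sum_univ_three,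
      Matrix.cons_val_zero, Matrix.cons_val_one, Matrix.head_cons,
      Matrix.cons_val_two, Matrix.tail_cons, Real.norm_eq_abs, sq_abs, PiLp.toLp_apply]
    have key : (-(Real.cos (t / a) / a) - -1 * (a * Real.cos (t / a))) ^ 2 +
        (-(Real.sin (t / a) / a) - -1 * (a * Real.sin (t / a))) ^ 2 +
        ((0:ℝ) - -1 * Real.sqrt (1 - a ^ 2)) ^ 2 = k ^ 2 := by
      have step : (-(Real.cos (t / a) / a) - -1 * (a * Real.cos (t / a))) ^ 2 +
          (-(Real.sin (t / a) / a) - -1 * (a * Real.sin (t / a))) ^ 2 +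
          ((0:ℝ) - -1 * Real.sqrt (1 - a ^ 2)) ^ 2 =
          (a - 1 / a) ^ 2 * (Real.sin (t / a) ^ 2 + Real.cos (t / a) ^ 2) +
            (1 - a ^ 2) := by
        rw [show ((0:ℝ) - -1 * Real.sqrt (1 - a ^ 2)) ^ 2 =
          Real.sqrt (1 - a ^ 2) ^ 2 by ring, hs t]
        ring
      rw [step, hsc t, mul_one, hka]
      field_simp
      ring
    rw [key, Real.sqrt_sq hk0]
  · have hk2' : σ ^ 2 * k ^ 2 = 1 - 2 * σ ^ 2 := by
      rw [hk2]; field_simp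
    linear_combination (-k) * hk2'
end

section
/- For each integer n ≥ 1 set σₙ = 1/(4n), aₙ = σₙ/√(1 − 2σₙ²) and uₙ(θ) = (aₙ cos(nθ), aₙ sin(nθ), √(1 − aₙ²)). Then the energies Eₙ = ∫₀^{2π} (1 + σₙ² κₙ(θ)²) ‖uₙ'(θ)‖ dθ, where κₙ(θ) = ‖uₙ''(θ) − ⟨uₙ''(θ), uₙ(θ)⟩ uₙ(θ)‖ / ‖uₙ'(θ)‖² is the geodesic curvature, converge to π as n → ∞. -/
open Real Filter

def e3 (x y z : ℝ) : EuclideanSpace ℝ (Fin 3) := WithLp.toLp 2 ![x, y, z]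

lemma hasDerivAt_e3 {f g h : ℝ → ℝ} {f' g' h' : ℝ} {x : ℝ}
    (hf : HasDerivAt f f' x) (hg : HasDerivAt g g' x) (hh : HasDerivAt h h' x) :
    HasDerivAt (fun θ => e3 (f θ) (g θ) (h θ)) (e3 f' g' h') x := by
  have H : HasDerivAt (fun θ => (![f θ, g θ, h θ] : Fin 3 → ℝ)) ![f', g', h'] x := by
    rw [hasDerivAt_pi]
    intro i
    fin_cases i <;> simpa
  exact ((PiLp.continuousLinearEquiv 2 ℝ fun _ : Fin 3 => ℝ).symm.hasFDerivAt.comp_hasDerivAt x H)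

lemma norm_e3 (x y z : ℝ) : ‖e3 x y z‖ = Real.sqrt (x^2 + y^2 + z^2) := by
  simp [e3, EuclideanSpace.norm_eq, Fin.sum_univ_three, sq_abs]

lemma inner_e3 (x y z x' y' z' : ℝ) :
    (inner ℝ (e3 x y z) (e3 x' y' z') : ℝ) = x*x' + y*y' + z*z' := by
  simp [e3, PiLp.inner_apply, RCLike.inner_apply, Fin.sum_univ_three]; ring

lemma sub_smul_e3 (x y z x' y' z' r : ℝ) :
    e3 x y z - r • e3 x' y' z' = e3 (x - r*x') (y - r*y') (z - r*z') := by
  ext i; fin_cases i <;> simp [e3]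

/-- For `σₙ = 1/(4n)`, `aₙ = σₙ/√(1 − 2σₙ²)` and
`uₙ(θ) = (aₙ cos(nθ), aₙ sin(nθ), √(1 − aₙ²))`, the regularized energies
`Eₙ = ∫₀^{2π} (1 + σₙ² κₙ(θ)²) ‖uₙ'(θ)‖ dθ` converge to `π`, where
`κₙ(θ) = ‖uₙ''(θ) − ⟨uₙ''(θ), uₙ(θ)⟩ uₙ(θ)‖ / ‖uₙ'(θ)‖²` is the geodesic
curvature. -/
theorem energies_tendsto_pi
    (σ a : ℕ → ℝ) (u : ℕ → ℝ → EuclideanSpace ℝ (Fin 3)) (κ : ℕ → ℝ → ℝ)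
    (hσ : ∀ n, σ n = 1 / (4 * n))
    (ha : ∀ n, a n = σ n / Real.sqrt (1 - 2 * σ n ^ 2))
    (hu : ∀ n, u n = fun θ => WithLp.toLp 2 ![a n * Real.cos (n * θ), a n * Real.sin (n * θ),
      Real.sqrt (1 - a n ^ 2)])
    (hκ : ∀ n θ, κ n θ =
      ‖deriv (deriv (u n)) θ
          - (inner ℝ (deriv (deriv (u n)) θ) (u n θ) : ℝ) • u n θ‖
        / ‖deriv (u n) θ‖ ^ 2) :
    Tendsto
      (fun n : ℕ =>
        ∫ θ in (0 : ℝ)..(2 * π), (1 + σ n ^ 2 * κ n θ ^ 2) * ‖deriv (u n) θ‖)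
      atTop (nhds π) := by
  have key : ∀ n : ℕ, 1 ≤ n →
      (∫ θ in (0:ℝ)..(2*π), (1 + σ n ^ 2 * κ n θ ^ 2) * ‖deriv (u n) θ‖)
        = π * (2 - 3 * σ n ^ 2) / (2 * Real.sqrt (1 - 2 * σ n ^ 2)) := by
    intro n hn
    have hn1 : (1:ℝ) ≤ (n:ℝ) := by exact_mod_cast hn
    have hsv : σ n = 1/(4*(n:ℝ)) := hσ n
    have hspos : 0 < σ n := by rw [hsv]; positivity
    have hsle : σ n ≤ 1/4 := by
      rw [hsv, div_le_div_iff₀ (by positivity) (by norm_num)]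
      nlinarith
    have h2 : (0:ℝ) < 1 - 2 * σ n ^ 2 := by nlinarith
    have hRpos : 0 < Real.sqrt (1 - 2 * σ n ^ 2) := Real.sqrt_pos.mpr h2
    have hR2 : Real.sqrt (1 - 2 * σ n ^ 2) ^ 2 = 1 - 2 * σ n ^ 2 := Real.sq_sqrt h2.le
    have hAv : a n = σ n / Real.sqrt (1 - 2 * σ n ^ 2) := ha n
    have hApos : 0 < a n := by rw [hAv]; positivity
    have hA2 : a n ^ 2 = σ n ^ 2 / (1 - 2 * σ n ^ 2) := by
      rw [hAv, div_pow, hR2]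
    have hA2lt : a n ^ 2 < 1 := by
      rw [hA2, div_lt_one h2]; nlinarith
    have hBpos : 0 < Real.sqrt (1 - a n ^ 2) := Real.sqrt_pos.mpr (by linarith)
    have hB2 : Real.sqrt (1 - a n ^ 2) ^ 2 = 1 - a n ^ 2 := Real.sq_sqrt (by linarith)
    have hNpos : (0:ℝ) < (n:ℝ) := by linarith
    have hu' : u n = fun θ => e3 (a n * Real.cos ((n:ℝ)*θ)) (a n * Real.sin ((n:ℝ)*θ))
        (Real.sqrt (1 - a n ^ 2)) := by
      rw [hu n]; rfl
    have hNθ : ∀ θ : ℝ, HasDerivAt (fun y : ℝ => (n:ℝ) * y) (n:ℝ) θ := by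
      intro θ; simpa using (hasDerivAt_id θ).const_mul (n:ℝ)
    have d1 : ∀ θ, HasDerivAt (u n)
        (e3 (-(a n * (n:ℝ) * Real.sin ((n:ℝ)*θ))) (a n * (n:ℝ) * Real.cos ((n:ℝ)*θ)) 0) θ := by
      intro θ
      rw [hu']
      refine hasDerivAt_e3 ?_ ?_ (hasDerivAt_const θ _)
      · have := ((hNθ θ).cos).const_mul (a n)
        exact this.congr_deriv (by ring)
      · have := ((hNθ θ).sin).const_mul (a n)
        exact this.congr_deriv (by ring)
    have hd1 : deriv (u n) = fun θ =>
        e3 (-(a n * (n:ℝ) * Real.sin ((n:ℝ)*θ))) (a n * (n:ℝ) * Real.cos ((n:ℝ)*θ)) 0 :=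
      funext fun θ => (d1 θ).deriv
    have d2 : ∀ θ, HasDerivAt (deriv (u n))
        (e3 (-(a n * (n:ℝ)^2 * Real.cos ((n:ℝ)*θ))) (-(a n * (n:ℝ)^2 * Real.sin ((n:ℝ)*θ))) 0)
        θ := by
      intro θ
      rw [hd1]
      refine hasDerivAt_e3 ?_ ?_ (hasDerivAt_const θ _)
      · have := (((hNθ θ).sin).const_mul (a n * (n:ℝ))).neg
        exact this.congr_deriv (by ring)
      · have := ((hNθ θ).cos).const_mul (a n * (n:ℝ))
        exact this.congr_deriv (by ring)
    have hd2 : ∀ θ, deriv (deriv (u n)) θ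
        = e3 (-(a n * (n:ℝ)^2 * Real.cos ((n:ℝ)*θ))) (-(a n * (n:ℝ)^2 * Real.sin ((n:ℝ)*θ))) 0 :=
      fun θ => (d2 θ).deriv
    have hnorm1 : ∀ θ, ‖deriv (u n) θ‖ = a n * (n:ℝ) := by
      intro θ
      have pyth := Real.sin_sq_add_cos_sq ((n:ℝ)*θ)
      simp only [hd1]
      rw [norm_e3,
        show (-(a n * (n:ℝ) * Real.sin ((n:ℝ)*θ)))^2 + (a n * (n:ℝ) * Real.cos ((n:ℝ)*θ))^2
            + (0:ℝ)^2 = (a n * (n:ℝ))^2 from by linear_combination (a n)^2 * (n:ℝ)^2 * pyth]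
      exact Real.sqrt_sq (by positivity)
    have hκv : ∀ θ, κ n θ = Real.sqrt (1 - a n ^ 2) / a n := by
      intro θ
      have pyth := Real.sin_sq_add_cos_sq ((n:ℝ)*θ)
      rw [hκ n θ, hd2 θ, hnorm1 θ]
      conv_lhs => rw [hu']
      rw [inner_e3, sub_smul_e3, norm_e3]
      rw [show (-(a n * (n:ℝ)^2 * Real.cos ((n:ℝ)*θ))
            - ((-(a n * (n:ℝ)^2 * Real.cos ((n:ℝ)*θ))) * (a n * Real.cos ((n:ℝ)*θ))
              + (-(a n * (n:ℝ)^2 * Real.sin ((n:ℝ)*θ))) * (a n * Real.sin ((n:ℝ)*θ))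
              + 0 * Real.sqrt (1 - a n ^ 2)) * (a n * Real.cos ((n:ℝ)*θ)))^2
          + (-(a n * (n:ℝ)^2 * Real.sin ((n:ℝ)*θ))
            - ((-(a n * (n:ℝ)^2 * Real.cos ((n:ℝ)*θ))) * (a n * Real.cos ((n:ℝ)*θ))
              + (-(a n * (n:ℝ)^2 * Real.sin ((n:ℝ)*θ))) * (a n * Real.sin ((n:ℝ)*θ))
              + 0 * Real.sqrt (1 - a n ^ 2)) * (a n * Real.sin ((n:ℝ)*θ)))^2
          + ((0:ℝ)
            - ((-(a n * (n:ℝ)^2 * Real.cos ((n:ℝ)*θ))) * (a n * Real.cos ((n:ℝ)*θ))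
              + (-(a n * (n:ℝ)^2 * Real.sin ((n:ℝ)*θ))) * (a n * Real.sin ((n:ℝ)*θ))
              + 0 * Real.sqrt (1 - a n ^ 2)) * Real.sqrt (1 - a n ^ 2))^2
          = (a n * (n:ℝ)^2 * Real.sqrt (1 - a n ^ 2))^2 from ?_]
      · rw [Real.sqrt_sq (by positivity)]
        field_simp
      · have hQ := hB2
        set c := Real.cos ((n:ℝ)*θ)
        set s' := Real.sin ((n:ℝ)*θ)
        set B := Real.sqrt (1 - a n ^ 2)
        linear_combination
          ((a n)^2 * (n:ℝ)^4 * ((a n)^4 * (s'^2+c^2)^2 - (a n)^2*(s'^2+c^2) + 1 - (a n)^2)) * pyth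
          + ((a n)^2 * (n:ℝ)^4 * ((a n)^2*(s'^2+c^2)^2 - 1)) * hQ
    have hpt : ∀ θ, (1 + σ n ^ 2 * κ n θ ^ 2) * ‖deriv (u n) θ‖
        = (2 - 3 * σ n ^ 2) * (a n * (n:ℝ)) := by
      intro θ
      rw [hκv θ, hnorm1 θ, div_pow]
      have hx : σ n ^ 2 * (Real.sqrt (1 - a n ^ 2) ^ 2 / a n ^ 2) = 1 - 3 * σ n ^ 2 := by
        rw [hB2, hA2, one_sub_div h2.ne', div_div_div_cancel_right₀ h2.ne']
        field_simp
        ring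
      rw [hx]
      ring
    have hAN : a n * (n:ℝ) = 1 / (4 * Real.sqrt (1 - 2 * σ n ^ 2)) := by
      have hsN : σ n * (n:ℝ) = 1/4 := by rw [hsv]; field_simp
      rw [hAv, div_mul_eq_mul_div, hsN, div_div]
    calc (∫ θ in (0:ℝ)..(2*π), (1 + σ n ^ 2 * κ n θ ^ 2) * ‖deriv (u n) θ‖)
        = ∫ _θ in (0:ℝ)..(2*π), (2 - 3 * σ n ^ 2) * (a n * (n:ℝ)) := by
          exact intervalIntegral.integral_congr fun θ _ => hpt θ
      _ = (2*π - 0) • ((2 - 3 * σ n ^ 2) * (a n * (n:ℝ))) := intervalIntegral.integral_const _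
      _ = π * (2 - 3 * σ n ^ 2) / (2 * Real.sqrt (1 - 2 * σ n ^ 2)) := by
          rw [smul_eq_mul, hAN]
          field_simp
          ring
  have hσ0 : Tendsto σ atTop (nhds 0) := by
    have h4 : Tendsto (fun m : ℕ => 4*(m:ℝ)) atTop atTop :=
      tendsto_natCast_atTop_atTop.const_mul_atTop (by norm_num)
    have h5 := h4.inv_tendsto_atTop
    exact h5.congr fun m => by rw [Pi.inv_apply, hσ m, one_div]
  have hg : ContinuousAt (fun x : ℝ => π * (2 - 3*x^2) / (2 * Real.sqrt (1 - 2*x^2))) 0 := by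
    apply ContinuousAt.div
    · fun_prop
    · exact (continuous_const.mul (Real.continuous_sqrt.comp (by fun_prop))).continuousAt
    · norm_num
  have hlim := (hg.tendsto).comp hσ0
  have hval : π * (2 - 3*(0:ℝ)^2) / (2 * Real.sqrt (1 - 2*(0:ℝ)^2)) = π := by
    norm_num
  rw [hval] at hlim
  refine hlim.congr' ?_
  filter_upwards [eventually_ge_atTop 1] with n hn
  exact (key n hn).symm
end

section
/- Let p : ℂ × ℂ → ℝ × ℂ be the Hopf map p(w,z) = (|w|² − |z|², 2 w z̄), with the Euclidean norm ‖(x,ζ)‖ = √(x² + |ζ|²) on ℝ × ℂ. Let Γ = (Γ₁, Γ₂) : ℝ → ℂ² be differentiable with |Γ₁(t)|² + |Γ₂(t)|² = 1 for all t and horizontal, i.e. the complex Hermitian inner product vanishes: Γ₁(t)·conj(Γ₁'(t)) + Γ₂(t)·conj(Γ₂'(t)) = 0 for all t. Then the projected curve γ = p ∘ Γ satisfies ‖γ'(t)‖ = 2 ‖Γ'(t)‖ for all t. -/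
/-- If `Γ = (Γ₁, Γ₂) : ℝ → ℂ²` is a differentiable curve on `S³` (i.e.
`|Γ₁|² + |Γ₂|² = 1`) which is horizontal for the Hopf fibration
(`Γ₁ conj(Γ₁') + Γ₂ conj(Γ₂') = 0`), then the projected curve `γ = p ∘ Γ` under
the Hopf map `p(w,z) = (|w|² − |z|², 2wz̄)` satisfies `‖γ'(t)‖ = 2‖Γ'(t)‖` for
the Euclidean norms on `ℝ × ℂ` and `ℂ²`. -/
theorem hopf_projection_doubles_speed
    (Γ₁ Γ₂ Γ₁' Γ₂' : ℝ → ℂ)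
    (hΓ₁ : ∀ t, HasDerivAt Γ₁ (Γ₁' t) t)
    (hΓ₂ : ∀ t, HasDerivAt Γ₂ (Γ₂' t) t)
    (hsphere : ∀ t, ‖Γ₁ t‖ ^ 2 + ‖Γ₂ t‖ ^ 2 = 1)
    (hhoriz : ∀ t,
      Γ₁ t * starRingEnd ℂ (Γ₁' t) + Γ₂ t * starRingEnd ℂ (Γ₂' t) = 0)
    (γ₁ : ℝ → ℝ) (γ₂ : ℝ → ℂ)
    (hγ₁ : γ₁ = fun t => ‖Γ₁ t‖ ^ 2 - ‖Γ₂ t‖ ^ 2)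
    (hγ₂ : γ₂ = fun t => 2 * Γ₁ t * starRingEnd ℂ (Γ₂ t)) :
    ∀ t : ℝ,
      Real.sqrt (deriv γ₁ t ^ 2 + ‖deriv γ₂ t‖ ^ 2)
        = 2 * Real.sqrt (‖Γ₁' t‖ ^ 2 + ‖Γ₂' t‖ ^ 2) := by
  intro t
  -- rewrite γ₁ as the real part of a complex-valued function
  have hγ₁' : γ₁ = fun t =>
      (Γ₁ t * starRingEnd ℂ (Γ₁ t) - Γ₂ t * starRingEnd ℂ (Γ₂ t)).re := by
    rw [hγ₁]
    funext s
    simp [Complex.mul_conj, Complex.sq_norm, Complex.normSq_apply, Complex.mul_re,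
      Complex.mul_im]
  -- derivative of γ₁
  have hd1 : HasDerivAt γ₁
      ((Γ₁' t * starRingEnd ℂ (Γ₁ t) + Γ₁ t * starRingEnd ℂ (Γ₁' t)
        - (Γ₂' t * starRingEnd ℂ (Γ₂ t) + Γ₂ t * starRingEnd ℂ (Γ₂' t))).re) t := by
    rw [hγ₁']
    have hF : HasDerivAt
        (fun s => Γ₁ s * starRingEnd ℂ (Γ₁ s) - Γ₂ s * starRingEnd ℂ (Γ₂ s))
        (Γ₁' t * starRingEnd ℂ (Γ₁ t) + Γ₁ t * starRingEnd ℂ (Γ₁' t)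
          - (Γ₂' t * starRingEnd ℂ (Γ₂ t) + Γ₂ t * starRingEnd ℂ (Γ₂' t))) t :=
      (((hΓ₁ t).mul (hΓ₁ t).star).sub ((hΓ₂ t).mul (hΓ₂ t).star))
    exact Complex.reCLM.hasFDerivAt.comp_hasDerivAt t hF
  -- derivative of γ₂
  have hd2 : HasDerivAt γ₂
      (2 * (Γ₁' t * starRingEnd ℂ (Γ₂ t) + Γ₁ t * starRingEnd ℂ (Γ₂' t))) t := by
    rw [hγ₂]
    have hF : HasDerivAt (fun s => Γ₁ s * starRingEnd ℂ (Γ₂ s))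
        (Γ₁' t * starRingEnd ℂ (Γ₂ t) + Γ₁ t * starRingEnd ℂ (Γ₂' t)) t :=
      (hΓ₁ t).mul (hΓ₂ t).star
    have := hF.const_mul (2 : ℂ)
    simpa [mul_assoc] using this
  rw [hd1.deriv, hd2.deriv]
  -- the key algebraic identity
  have key : ((Γ₁' t * starRingEnd ℂ (Γ₁ t) + Γ₁ t * starRingEnd ℂ (Γ₁' t)
        - (Γ₂' t * starRingEnd ℂ (Γ₂ t) + Γ₂ t * starRingEnd ℂ (Γ₂' t))).re) ^ 2
      + ‖2 * (Γ₁' t * starRingEnd ℂ (Γ₂ t) + Γ₁ t * starRingEnd ℂ (Γ₂' t))‖ ^ 2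
      = 4 * (‖Γ₁' t‖ ^ 2 + ‖Γ₂' t‖ ^ 2) := by
    have hS := hsphere t
    have hH := hhoriz t
    rw [Complex.ext_iff] at hH
    obtain ⟨hHre, hHim⟩ := hH
    simp only [Complex.sq_norm, Complex.normSq_apply, Complex.add_re, Complex.add_im,
      Complex.sub_re, Complex.sub_im, Complex.mul_re, Complex.mul_im, Complex.conj_re,
      Complex.conj_im, Complex.zero_re, Complex.zero_im, Complex.re_ofNat,
      Complex.im_ofNat] at *
    set ar := (Γ₁ t).re; set ai := (Γ₁ t).im
    set br := (Γ₂ t).re; set bi := (Γ₂ t).im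
    set pr := (Γ₁' t).re; set pi := (Γ₁' t).im
    set qr := (Γ₂' t).re; set qi := (Γ₂' t).im
    linear_combination (4 * (pr ^ 2 + pi ^ 2 + qr ^ 2 + qi ^ 2)) * hS
      - 4 * (ai * pr - ar * pi + bi * qr - br * qi) * hHim
  rw [key]
  rw [show (4 : ℝ) * (‖Γ₁' t‖ ^ 2 + ‖Γ₂' t‖ ^ 2)
      = 2 ^ 2 * (‖Γ₁' t‖ ^ 2 + ‖Γ₂' t‖ ^ 2) by ring]
  rw [Real.sqrt_mul (by positivity), Real.sqrt_sq (by norm_num)]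
end
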